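/- arXiv:1804.10423 — 2 statements merged into one kernel-verified Lean document; each statement's English description precedes it below -/
import Mathlib

section
/- Let (X, d, ≪, ≤, τ) be a strongly causal Lorentzian length space. Then for every x ∈ X and every localising neighbourhood Ω of x with local time separation function ω, there exists a neighbourhood U of x with U ⊆ Ω such that ω(p,q) = τ(p,q) for all p, q ∈ U. In particular, τ is continuous on a neighbourhood of the diagonal in X × X. -/
open scoped ENNReal NNReal Topology
open Set

universe u v

/-- A *Lorentzian pre-length space* `(X, d, ≪, ≤, τ)`: a metric space `(X,d)` together with a
preorder `≤` (`causal`), a transitive relation `≪` (`chron`) contained in `≤`, and a lower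
semicontinuous time separation function `τ : X × X → [0,∞]` satisfying the reverse triangle
inequality, `τ(x,y) = 0` if `x ≰ y`, and `τ(x,y) > 0 ↔ x ≪ y`. -/
structure LorentzianPreLength (X : Type u) [MetricSpace X] : Type u where
  chron : X → X → Prop
  causal : X → X → Prop
  causal_refl : ∀ x, causal x x
  causal_trans : ∀ {x y z}, causal x y → causal y z → causal x z
  chron_trans : ∀ {x y z}, chron x y → chron y z → chron x z
  chron_le_causal : ∀ {x y}, chron x y → causal x y
  tau : X → X → ℝ≥0∞
  tau_lsc : LowerSemicontinuous fun p : X × X => tau p.1 p.2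
  tau_rev_triangle : ∀ {x y z}, causal x y → causal y z → tau x y + tau y z ≤ tau x z
  tau_eq_zero : ∀ {x y}, ¬ causal x y → tau x y = 0
  tau_pos_iff_chron : ∀ {x y}, 0 < tau x y ↔ chron x y

namespace LorentzianPreLength

variable {X : Type u} [MetricSpace X] (L : LorentzianPreLength X)

/-- The chronological future `I⁺(x) = {y | x ≪ y}`. -/
def chronFuture (x : X) : Set X := {y | L.chron x y}

/-- The chronological past `I⁻(x) = {y | y ≪ x}`. -/
def chronPast (x : X) : Set X := {y | L.chron y x}

/-- A future-directed causal curve on the (interval) `I`: locally Lipschitz, non-constant, and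
any two of its points are causally related in the direction of the parametrisation. -/
def IsCausalOn (γ : ℝ → X) (I : Set ℝ) : Prop :=
  (∀ c d : ℝ, c ≤ d → Icc c d ⊆ I → ∃ K : ℝ≥0, LipschitzOnWith K γ (Icc c d)) ∧
  (∀ ⦃s t : ℝ⦄, s ∈ I → t ∈ I → s < t → L.causal (γ s) (γ t)) ∧
  (∃ s ∈ I, ∃ t ∈ I, γ s ≠ γ t)

/-- A future-directed timelike curve. -/
def IsTimelikeOn (γ : ℝ → X) (I : Set ℝ) : Prop :=
  L.IsCausalOn γ I ∧ ∀ ⦃s t : ℝ⦄, s ∈ I → t ∈ I → s < t → L.chron (γ s) (γ t)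

/-- A past-directed causal curve. -/
def IsPdCausalOn (γ : ℝ → X) (I : Set ℝ) : Prop :=
  (∀ c d : ℝ, c ≤ d → Icc c d ⊆ I → ∃ K : ℝ≥0, LipschitzOnWith K γ (Icc c d)) ∧
  (∀ ⦃s t : ℝ⦄, s ∈ I → t ∈ I → s < t → L.causal (γ t) (γ s)) ∧
  (∃ s ∈ I, ∃ t ∈ I, γ s ≠ γ t)

/-- A past-directed timelike curve. -/
def IsPdTimelikeOn (γ : ℝ → X) (I : Set ℝ) : Prop :=
  L.IsPdCausalOn γ I ∧ ∀ ⦃s t : ℝ⦄, s ∈ I → t ∈ I → s < t → L.chron (γ t) (γ s)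

/-- `t : ℕ → ℝ` is a partition `c = t₀ < t₁ < ⋯ < t_N = d`. -/
def IsPartition (c d : ℝ) (N : ℕ) (t : ℕ → ℝ) : Prop :=
  t 0 = c ∧ t N = d ∧ ∀ i < N, t i < t (i + 1)

/-- The `τ`-length of a curve on `[c,d]`:
`L_τ(γ) = inf { Σ τ(γ(tᵢ), γ(tᵢ₊₁)) : c = t₀ < ⋯ < t_N = d }`. -/
noncomputable def tauLen (γ : ℝ → X) (c d : ℝ) : ℝ≥0∞ :=
  ⨅ (N : ℕ) (t : ℕ → ℝ) (_ : IsPartition c d N t),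
    ∑ i ∈ Finset.range N, L.tau (γ (t i)) (γ (t (i + 1)))

/-- The `τ`-length of a curve on an arbitrary interval `I`, as the supremum of the lengths of its
restrictions to compact subintervals. -/
noncomputable def tauLenOn (γ : ℝ → X) (I : Set ℝ) : ℝ≥0∞ :=
  ⨆ (c : ℝ) (d : ℝ) (_ : c ≤ d) (_ : Icc c d ⊆ I), L.tauLen γ c d

/-- `γ : [c,d] → Ω` is maximal in `Ω`: no future-directed causal curve in `Ω` with the same
endpoints is longer. -/
def IsMaximalIn (γ : ℝ → X) (c d : ℝ) (Ω : Set X) : Prop :=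
  ∀ (σ : ℝ → X) (c' d' : ℝ), L.IsCausalOn σ (Icc c' d') → σ c' = γ c → σ d' = γ d →
    MapsTo σ (Icc c' d') Ω → L.tauLen σ c' d' ≤ L.tauLen γ c d

/-- A localising neighbourhood `Ω` of `x`, with local time separation function `ω`. -/
structure LocalisingNbhd (L : LorentzianPreLength X) (x : X) : Type u where
  Ω : Set X
  isOpen : IsOpen Ω
  mem : x ∈ Ω
  lengthBound : ∃ C : ℝ≥0∞, C < ∞ ∧ ∀ (γ : ℝ → X) (c d : ℝ), L.IsCausalOn γ (Icc c d) →
      MapsTo γ (Icc c d) Ω → eVariationOn γ (Icc c d) ≤ C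
  omega : X → X → ℝ≥0∞
  omega_lt_top : ∀ p ∈ Ω, ∀ q ∈ Ω, omega p q < ∞
  omega_cont : ContinuousOn (fun p : X × X => omega p.1 p.2) (Ω ×ˢ Ω)
  omega_rev_triangle : ∀ {p q r}, p ∈ Ω → q ∈ Ω → r ∈ Ω →
      L.causal p q → L.causal q r → omega p q + omega q r ≤ omega p r
  omega_eq_zero : ∀ {p q}, p ∈ Ω → q ∈ Ω → ¬ L.causal p q → omega p q = 0
  omega_pos_iff : ∀ {p q}, p ∈ Ω → q ∈ Ω → (0 < omega p q ↔ L.chron p q)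
  future_nonempty : ∀ y ∈ Ω, (L.chronFuture y ∩ Ω).Nonempty
  past_nonempty : ∀ y ∈ Ω, (L.chronPast y ∩ Ω).Nonempty
  max_curve : ∀ p ∈ Ω, ∀ q ∈ Ω, L.causal p q → p ≠ q →
    ∃ γ : ℝ → X, L.IsCausalOn γ (Icc 0 1) ∧ γ 0 = p ∧ γ 1 = q ∧
      MapsTo γ (Icc 0 1) Ω ∧ L.IsMaximalIn γ 0 1 Ω ∧
      L.tauLen γ 0 1 = omega p q ∧ omega p q ≤ L.tau p q

/-- The curve `γ` contains a null segment on `[c,d]`. -/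
def HasNullSegment (γ : ℝ → X) (c d : ℝ) : Prop :=
  ∃ s t : ℝ, c ≤ s ∧ s < t ∧ t ≤ d ∧
    ∀ ⦃u v : ℝ⦄, s ≤ u → u < v → v ≤ t → ¬ L.chron (γ u) (γ v)

/-- A localising neighbourhood is *regular* if maximal curves between timelike related points can
be chosen timelike and strictly longer than any causal curve containing a null segment. -/
def LocalisingNbhd.IsRegular {x : X} (Nb : L.LocalisingNbhd x) : Prop :=
  ∀ p ∈ Nb.Ω, ∀ q ∈ Nb.Ω, L.chron p q →
    ∃ γ : ℝ → X, L.IsTimelikeOn γ (Icc 0 1) ∧ γ 0 = p ∧ γ 1 = q ∧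
      MapsTo γ (Icc 0 1) Nb.Ω ∧ L.IsMaximalIn γ 0 1 Nb.Ω ∧
      L.tauLen γ 0 1 = Nb.omega p q ∧ Nb.omega p q ≤ L.tau p q ∧
      ∀ (σ : ℝ → X) (c d : ℝ), L.IsCausalOn σ (Icc c d) → σ c = p → σ d = q →
        MapsTo σ (Icc c d) Nb.Ω → L.HasNullSegment σ c d →
        L.tauLen σ c d < L.tauLen γ 0 1

/-- `X` is localisable: every point has a localising neighbourhood. -/
def Localisable : Prop := ∀ x : X, Nonempty (L.LocalisingNbhd x)

/-- `X` is regularly localisable. -/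
def RegularlyLocalisable : Prop := ∀ x : X, ∃ Nb : L.LocalisingNbhd x, Nb.IsRegular

/-- `X` is locally causally closed: every point has a neighbourhood `U` such that `≤` is closed
in `closure U × closure U`. -/
def LocallyCausallyClosed : Prop :=
  ∀ x : X, ∃ U ∈ 𝓝 x,
    IsClosed {p : X × X | p.1 ∈ closure U ∧ p.2 ∈ closure U ∧ L.causal p.1 p.2}

/-- `X` is causally path connected. -/
def CausallyPathConnected : Prop :=
  (∀ ⦃x y⦄, L.chron x y →
      ∃ γ : ℝ → X, L.IsTimelikeOn γ (Icc 0 1) ∧ γ 0 = x ∧ γ 1 = y) ∧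
  (∀ ⦃x y⦄, L.causal x y → x ≠ y →
      ∃ γ : ℝ → X, L.IsCausalOn γ (Icc 0 1) ∧ γ 0 = x ∧ γ 1 = y)

/-- `𝒯(x,y)`: the supremum of `τ`-lengths of future-directed causal curves from `x` to `y`
(`0` if there are none). -/
noncomputable def maxLen (x y : X) : ℝ≥0∞ :=
  ⨆ (γ : ℝ → X) (_ : L.IsCausalOn γ (Icc 0 1)) (_ : γ 0 = x) (_ : γ 1 = y), L.tauLen γ 0 1

/-- A *Lorentzian length space*: a locally causally closed, causally path connected, localisable
Lorentzian pre-length space with `τ = 𝒯`. -/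
structure IsLLS : Prop where
  locallyCausallyClosed : L.LocallyCausallyClosed
  causallyPathConnected : L.CausallyPathConnected
  localisable : L.Localisable
  tau_eq_maxLen : ∀ x y : X, L.tau x y = L.maxLen x y

/-- A *regular Lorentzian length space*. -/
def IsRegularLLS : Prop := L.IsLLS ∧ L.RegularlyLocalisable

/-- Strong causality: every point has arbitrarily small neighbourhoods which no causal curve
leaves and re-enters. -/
def StronglyCausal : Prop :=
  ∀ x : X, ∀ V ∈ 𝓝 x, ∃ U ∈ 𝓝 x, U ⊆ V ∧
    ∀ (γ : ℝ → X) (c d : ℝ), c ≤ d → L.IsCausalOn γ (Icc c d) →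
      γ c ∈ U → γ d ∈ U → MapsTo γ (Icc c d) V

/-- A (synthetic) geodesic: a future-directed causal curve which is locally maximal within
localising neighbourhoods. -/
def IsGeodesicOn (γ : ℝ → X) (I : Set ℝ) : Prop :=
  L.IsCausalOn γ I ∧
  ∀ t₀ ∈ I, ∃ (Nb : L.LocalisingNbhd (γ t₀)) (c d : ℝ),
    c ≤ t₀ ∧ t₀ ≤ d ∧ c < d ∧ Icc c d ⊆ I ∧ Icc c d ∈ 𝓝[I] t₀ ∧
    MapsTo γ (Icc c d) Nb.Ω ∧ L.IsMaximalIn γ c d Nb.Ω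

/-- A timelike (synthetic) geodesic. -/
def IsTimelikeGeodesicOn (γ : ℝ → X) (I : Set ℝ) : Prop :=
  L.IsGeodesicOn γ I ∧ L.IsTimelikeOn γ I

/-- An inextendible timelike geodesic: not the restriction of a timelike geodesic defined on a
strictly larger interval. -/
def IsInextTimelikeGeodesic (γ : ℝ → X) (I : Set ℝ) : Prop :=
  L.IsTimelikeGeodesicOn γ I ∧
  ∀ (γ' : ℝ → X) (I' : Set ℝ), I'.OrdConnected → I ⊆ I' → I ≠ I' →
    (∀ t ∈ I, γ' t = γ t) → ¬ L.IsTimelikeGeodesicOn γ' I'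

/-- Property (TC): all inextendible timelike geodesics have infinite `τ`-length. -/
def PropertyTC : Prop :=
  ∀ (γ : ℝ → X) (I : Set ℝ), I.OrdConnected → L.IsInextTimelikeGeodesic γ I →
    L.tauLenOn γ I = ∞

/-- An *extension* of the Lorentzian pre-length space `L` on `X` by the Lorentzian pre-length
space `L'` on `Y`: a metric isometry `ι` of `X` onto a proper open subset of the connected space
`Y` preserving the causal relations, timelike/causal curves and their `τ`-lengths. -/
structure Extension {Y : Type v} [MetricSpace Y] (L : LorentzianPreLength X)
    (L' : LorentzianPreLength Y) : Type (max u v) where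
  ι : X → Y
  connected : ConnectedSpace Y
  isometry : Isometry ι
  range_open : IsOpen (Set.range ι)
  range_ne_univ : Set.range ι ≠ Set.univ
  pres_causal : ∀ {x y}, L.causal x y → L'.causal (ι x) (ι y)
  pres_chron : ∀ {x y}, L.chron x y → L'.chron (ι x) (ι y)
  causal_iff : ∀ (γ : ℝ → X) (I : Set ℝ), I.OrdConnected →
      (L.IsCausalOn γ I ↔ L'.IsCausalOn (ι ∘ γ) I)
  timelike_iff : ∀ (γ : ℝ → X) (I : Set ℝ), I.OrdConnected →
      (L.IsTimelikeOn γ I ↔ L'.IsTimelikeOn (ι ∘ γ) I)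
  len_eq : ∀ (γ : ℝ → X) (c d : ℝ), L.IsCausalOn γ (Icc c d) →
      L.tauLen γ c d = L'.tauLen (ι ∘ γ) c d

end LorentzianPreLength

/-- In a strongly causal Lorentzian length space, for every `x` and every
localising neighbourhood `Ω` of `x` with local time separation `ω`, there is a neighbourhood
`U ⊆ Ω` of `x` on which `ω = τ`; in particular `τ` is continuous on a neighbourhood of the
diagonal of `X × X`. -/
theorem local_timeSep_eq_tau {X : Type u} [MetricSpace X] (L : LorentzianPreLength X)
    (hSC : L.StronglyCausal) (hL : L.IsLLS) :
    (∀ (x : X) (Nb : L.LocalisingNbhd x), ∃ U ∈ 𝓝 x, U ⊆ Nb.Ω ∧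
        ∀ p ∈ U, ∀ q ∈ U, Nb.omega p q = L.tau p q) ∧
    ∃ W : Set (X × X), IsOpen W ∧ (∀ x : X, (x, x) ∈ W) ∧
      ContinuousOn (fun p : X × X => L.tau p.1 p.2) W := by

  have hNoLoop : ∀ (p : X) (γ : ℝ → X), L.IsCausalOn γ (Icc 0 1) → γ 0 = p → γ 1 = p →
      False := by
    intro p γ hγ h0 h1
    obtain ⟨s, hs, t, ht, hst⟩ := hγ.2.2
    have hex : ∃ r ∈ Icc (0:ℝ) 1, γ r ≠ p := by
      by_contra h
      push_neg at h
      exact hst (by rw [h s hs, h t ht])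
    obtain ⟨r, hr, hrp⟩ := hex
    obtain ⟨U, hU, hUsub, hUprop⟩ := hSC p ({γ r}ᶜ)
      (IsOpen.mem_nhds isOpen_compl_singleton (Ne.symm hrp))
    have hpU : p ∈ U := mem_of_mem_nhds hU
    have hmm := hUprop γ 0 1 zero_le_one hγ (by rw [h0]; exact hpU) (by rw [h1]; exact hpU) hr
    exact hmm rfl
  have key : ∀ (x : X) (Nb : L.LocalisingNbhd x), ∃ U ∈ 𝓝 x, U ⊆ Nb.Ω ∧
      ∀ p ∈ U, ∀ q ∈ U, Nb.omega p q = L.tau p q := by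
    intro x Nb
    obtain ⟨U, hU, hUsub, hUprop⟩ := hSC x Nb.Ω (Nb.isOpen.mem_nhds Nb.mem)
    refine ⟨U, hU, hUsub, ?_⟩
    intro p hp q hq
    have hpΩ := hUsub hp
    have hqΩ := hUsub hq
    by_cases hc : L.causal p q
    · by_cases hpq : p = q
      · subst hpq
        have hchron : ¬ L.chron p p := by
          intro hch
          obtain ⟨γ, hγ, h0, h1⟩ := hL.causallyPathConnected.1 hch
          exact hNoLoop p γ hγ.1 h0 h1
        have hω : Nb.omega p p = 0 := by
          by_contra h
          exact hchron ((Nb.omega_pos_iff hpΩ hpΩ).mp (pos_iff_ne_zero.mpr h))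
        have hτ : L.tau p p = 0 := by
          rw [hL.tau_eq_maxLen]
          refine le_antisymm ?_ zero_le
          refine iSup_le fun γ => iSup_le fun hγ => iSup_le fun h0 => iSup_le fun h1 => ?_
          exact (hNoLoop p γ hγ h0 h1).elim
        rw [hω, hτ]
      · obtain ⟨γ₀, hγ₀, h00, h01, hmaps, hmax, hlen, hle⟩ :=
          Nb.max_curve p hpΩ q hqΩ hc hpq
        refine le_antisymm hle ?_
        rw [hL.tau_eq_maxLen]
        refine iSup_le fun γ => iSup_le fun hγ => iSup_le fun h0 => iSup_le fun h1 => ?_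
        have hmapsΩ : MapsTo γ (Icc 0 1) Nb.Ω :=
          hUprop γ 0 1 zero_le_one hγ (by rw [h0]; exact hp) (by rw [h1]; exact hq)
        calc L.tauLen γ 0 1 ≤ L.tauLen γ₀ 0 1 :=
              hmax γ 0 1 hγ (by rw [h0, h00]) (by rw [h1, h01]) hmapsΩ
          _ = Nb.omega p q := hlen
    · rw [Nb.omega_eq_zero hpΩ hqΩ hc, L.tau_eq_zero hc]
  refine ⟨key, ?_⟩
  choose U hU hUsub hUeq using fun x => key x (hL.localisable x).some
  refine ⟨⋃ x, interior (U x) ×ˢ interior (U x),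
    isOpen_iUnion fun x => isOpen_interior.prod isOpen_interior,
    fun x => mem_iUnion.mpr ⟨x, ⟨mem_interior_iff_mem_nhds.mpr (hU x),
      mem_interior_iff_mem_nhds.mpr (hU x)⟩⟩, ?_⟩
  intro p hp
  obtain ⟨x, hpx⟩ := mem_iUnion.mp hp
  have hopen : IsOpen (interior (U x) ×ˢ interior (U x)) :=
    isOpen_interior.prod isOpen_interior
  have hcont : ContinuousOn (fun p : X × X => L.tau p.1 p.2)
      (interior (U x) ×ˢ interior (U x)) := by
    refine ContinuousOn.congr (((hL.localisable x).some.omega_cont).mono ?_) ?_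
    · exact prod_mono (interior_subset.trans (hUsub x)) (interior_subset.trans (hUsub x))
    · intro q hq
      exact (hUeq x q.1 (interior_subset hq.1) q.2 (interior_subset hq.2)).symm
  exact (hcont.continuousAt (hopen.mem_nhds hpx)).continuousWithinAt
end

section
/- Let (X̃, d̃, ≪̃, ≤̃, τ̃) be a regular Lorentzian length space extending a strongly causal Lorentzian length space (X, d, ≪, ≤, τ) via ι, let λ : [0,t*) → X be the pullback under ι of a timelike curve that is maximal in some localising neighbourhood Ũ of X̃ and whose image under ι lies in Ũ ∩ ι(X). Then λ is a timelike geodesic of X of finite τ-length L_τ(λ) < ∞ which is inextendible as a geodesic in X. -/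
open scoped ENNReal NNReal Topology
open Set

universe u v

section Aux

namespace LorentzianPreLength

variable {X : Type u} [MetricSpace X] (L : LorentzianPreLength X)

lemma IsPartition.t_mono {c d : ℝ} {N : ℕ} {t : ℕ → ℝ} (h : IsPartition c d N t) :
    ∀ ⦃i j : ℕ⦄, i ≤ j → j ≤ N → t i ≤ t j := by
  intro i j hij hjN
  induction j, hij using Nat.le_induction with
  | base => exact le_rfl
  | succ n hn ih =>
    exact le_trans (ih (by omega)) (h.2.2 n (by omega)).le

lemma IsPartition.mem_Icc {c d : ℝ} {N : ℕ} {t : ℕ → ℝ} (h : IsPartition c d N t)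
    {i : ℕ} (hi : i ≤ N) : t i ∈ Icc c d :=
  ⟨h.1 ▸ h.t_mono (Nat.zero_le i) hi, h.2.1 ▸ h.t_mono hi le_rfl⟩

lemma tauLen_self (γ : ℝ → X) (a : ℝ) : L.tauLen γ a a = 0 := by
  refine le_antisymm ?_ zero_le
  have hp : IsPartition a a 0 (fun _ => a) := ⟨rfl, rfl, by omega⟩
  calc L.tauLen γ a a ≤ ∑ i ∈ Finset.range 0, L.tau (γ a) (γ a) := by
        refine iInf_le_of_le 0 (iInf_le_of_le (fun _ => a) (iInf_le_of_le hp ?_))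
        simp
    _ = 0 := by simp

lemma tauLen_congr {f g : ℝ → X} {c d : ℝ} (h : ∀ x ∈ Icc c d, f x = g x) :
    L.tauLen f c d = L.tauLen g c d := by
  have key : ∀ (f g : ℝ → X), (∀ x ∈ Icc c d, f x = g x) →
      L.tauLen f c d ≤ L.tauLen g c d := by
    intro f g h
    refine le_iInf fun N => le_iInf fun t => le_iInf fun ht => ?_
    refine iInf_le_of_le N (iInf_le_of_le t (iInf_le_of_le ht (le_of_eq ?_)))
    refine Finset.sum_congr rfl fun i hi => ?_
    rw [Finset.mem_range] at hi
    rw [h _ (ht.mem_Icc (by omega)), h _ (ht.mem_Icc (by omega))]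
  exact le_antisymm (key f g h) (key g f fun x hx => (h x hx).symm)

lemma tauLen_subadd (γ : ℝ → X) {a m b : ℝ} (ham : a ≤ m) (hmb : m ≤ b) :
    L.tauLen γ a b ≤ L.tauLen γ a m + L.tauLen γ m b := by
  simp only [tauLen, ENNReal.iInf_add, ENNReal.add_iInf]
  refine le_iInf fun N2 => le_iInf fun t2 => le_iInf fun h2 =>
    le_iInf fun N1 => le_iInf fun t1 => le_iInf fun h1 => ?_
  set t : ℕ → ℝ := fun i => if i ≤ N1 then t1 i else t2 (i - N1) with hts
  have hval : ∀ j : ℕ, j ≤ N2 → t (N1 + j) = t2 j := by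
    intro j hj
    by_cases hj0 : j = 0
    · subst hj0
      simp only [hts, Nat.add_zero, le_refl, if_pos]
      rw [h1.2.1, h2.1]
    · simp only [hts]
      rw [if_neg (by omega)]
      congr 1
      omega
  have hp : IsPartition a b (N1 + N2) t := by
    refine ⟨by simp only [hts]; rw [if_pos (Nat.zero_le _)]; exact h1.1, ?_, ?_⟩
    · rw [hval N2 le_rfl]; exact h2.2.1
    · intro i hi
      by_cases hi1 : i + 1 ≤ N1
      · simp only [hts]
        rw [if_pos (by omega), if_pos hi1]
        exact h1.2.2 i (by omega)
      · by_cases hi2 : i ≤ N1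
        · have hiN : i = N1 := by omega
          have e1 : t i = t2 0 := by
            rw [hiN, show N1 = N1 + 0 by omega, hval 0 (Nat.zero_le _)]
          have e2 : t (i + 1) = t2 1 := by
            rw [hiN, show N1 + 1 = N1 + 1 from rfl, hval 1 (by omega)]
          rw [e1, e2]
          exact h2.2.2 0 (by omega)
        · have e1 : t i = t2 (i - N1) := by simp only [hts]; rw [if_neg hi2]
          have e2 : t (i + 1) = t2 (i - N1 + 1) := by
            simp only [hts]; rw [if_neg (by omega)]; congr 1; omega
          rw [e1, e2]
          exact h2.2.2 (i - N1) (by omega)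
  refine iInf_le_of_le (N1 + N2) (iInf_le_of_le t (iInf_le_of_le hp (le_of_eq ?_)))
  rw [Finset.sum_range_add]
  congr 1
  · refine Finset.sum_congr rfl fun i hi => ?_
    rw [Finset.mem_range] at hi
    have e1 : t i = t1 i := by simp only [hts]; rw [if_pos (by omega)]
    have e2 : t (i + 1) = t1 (i + 1) := by simp only [hts]; rw [if_pos (by omega)]
    rw [e1, e2]
  · refine Finset.sum_congr rfl fun j hj => ?_
    rw [Finset.mem_range] at hj
    rw [hval j (by omega), show N1 + j + 1 = N1 + (j + 1) by omega, hval (j + 1) (by omega)]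

lemma isCausalOn_of_subset {γ : ℝ → X} {I J : Set ℝ} (h : L.IsCausalOn γ I) (hJ : J ⊆ I)
    (hne : ∃ s ∈ J, ∃ t ∈ J, γ s ≠ γ t) : L.IsCausalOn γ J :=
  ⟨fun c d hcd hsub => h.1 c d hcd (hsub.trans hJ),
    fun _ _ hs ht hst => h.2.1 (hJ hs) (hJ ht) hst, hne⟩

lemma isTimelikeOn_of_subset {γ : ℝ → X} {I J : Set ℝ} (h : L.IsTimelikeOn γ I) (hJ : J ⊆ I)
    (hne : ∃ s ∈ J, ∃ t ∈ J, γ s ≠ γ t) : L.IsTimelikeOn γ J :=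
  ⟨L.isCausalOn_of_subset h.1 hJ hne, fun _ _ hs ht hst => h.2 (hJ hs) (hJ ht) hst⟩

lemma isTimelikeOn_congr {f g : ℝ → X} {I : Set ℝ} (h : ∀ t ∈ I, f t = g t)
    (hf : L.IsTimelikeOn f I) : L.IsTimelikeOn g I := by
  obtain ⟨⟨hlip, hcaus, s, hs, t, ht, hne⟩, hchron⟩ := hf
  refine ⟨⟨fun c d hcd hsub => ?_, fun u v hu hv huv => ?_, s, hs, t, ht, ?_⟩,
    fun u v hu hv huv => ?_⟩
  · obtain ⟨K, hK⟩ := hlip c d hcd hsub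
    refine ⟨K, fun x hx y hy => ?_⟩
    rw [← h x (hsub hx), ← h y (hsub hy)]
    exact hK hx hy
  · rw [← h u hu, ← h v hv]; exact hcaus hu hv huv
  · rw [← h s hs, ← h t ht]; exact hne
  · rw [← h u hu, ← h v hv]; exact hchron hu hv huv

lemma LocalisingNbhd.not_chron_self {x : X} (Nb : L.LocalisingNbhd x) {y : X}
    (hy : y ∈ Nb.Ω) : ¬ L.chron y y := by
  intro hch
  have hpos : 0 < Nb.omega y y := (Nb.omega_pos_iff hy hy).2 hch
  have hfin : Nb.omega y y < ∞ := Nb.omega_lt_top y hy y hy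
  have hrev := Nb.omega_rev_triangle hy hy hy (L.causal_refl y) (L.causal_refl y)
  have : Nb.omega y y ≤ 0 := by
    have h2 : Nb.omega y y + Nb.omega y y ≤ Nb.omega y y + 0 := by simpa using hrev
    exact (ENNReal.add_le_add_iff_left hfin.ne).1 h2
  exact absurd (le_antisymm this zero_le) hpos.ne'

end LorentzianPreLength

end Aux


/-- Let the regular Lorentzian length space `X̃` extend the strongly causal
Lorentzian length space `X` via `ι`, let `γ̃ : [0,1] → X̃` be a future-directed timelike curve
which is maximal in a localising neighbourhood `Ũ` of `X̃`, with `γ̃([0,1]) ⊆ Ũ`,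
`γ̃([0,t*)) ⊆ ι(X)` and `γ̃(t*) ∉ ι(X)`, and let `λ : [0,t*) → X` be the pullback `ι ∘ λ = γ̃`.
Then `λ` is a timelike geodesic of `X` of finite `τ`-length which is inextendible as a geodesic
in `X`. -/
theorem pullback_maximal_curve_is_finite_inext_geodesic
    {X : Type u} {Y : Type v} [MetricSpace X] [MetricSpace Y]
    (L : LorentzianPreLength X) (L' : LorentzianPreLength Y)
    (hSC : L.StronglyCausal) (hL : L.IsLLS) (hL' : L'.IsRegularLLS)
    (E : L.Extension L')
    (p : Y) (Nb : L'.LocalisingNbhd p)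
    (γ' : ℝ → Y) (tstar : ℝ) (htstar : tstar ∈ Set.Ioo (0:ℝ) 1)
    (hγ'tl : L'.IsTimelikeOn γ' (Set.Icc 0 1))
    (hγ'max : L'.IsMaximalIn γ' 0 1 Nb.Ω)
    (hγ'real : L'.tauLen γ' 0 1 = Nb.omega (γ' 0) (γ' 1))
    (hmaps : Set.MapsTo γ' (Set.Icc 0 1) Nb.Ω)
    (hend : γ' 1 = p)
    (hin : ∀ t ∈ Set.Ico (0:ℝ) tstar, γ' t ∈ Set.range E.ι)
    (hout : γ' tstar ∉ Set.range E.ι)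
    (lam : ℝ → X) (hlam : ∀ t ∈ Set.Ico (0:ℝ) tstar, E.ι (lam t) = γ' t) :
    L.IsTimelikeGeodesicOn lam (Set.Ico 0 tstar) ∧
    L.tauLenOn lam (Set.Ico 0 tstar) < ∞ ∧
    ¬ ∃ lam' : ℝ → X, L.IsGeodesicOn lam' (Set.Icc 0 tstar) ∧
        ∀ t ∈ Set.Ico (0:ℝ) tstar, lam' t = lam t := by
  obtain ⟨ht0, ht1⟩ := htstar
  set I : Set ℝ := Set.Ico 0 tstar with hI
  have hIsub : I ⊆ Icc (0:ℝ) 1 := fun x hx => ⟨hx.1, (hx.2.trans ht1).le⟩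
  have hch : ∀ ⦃s t : ℝ⦄, s ∈ Icc (0:ℝ) 1 → t ∈ Icc (0:ℝ) 1 → s < t →
      L'.chron (γ' s) (γ' t) := fun s t hs ht hst => hγ'tl.2 hs ht hst
  have hinj : ∀ ⦃s t : ℝ⦄, s ∈ Icc (0:ℝ) 1 → t ∈ Icc (0:ℝ) 1 → s < t → γ' s ≠ γ' t := by
    intro s t hs ht hst heq
    have h := hch hs ht hst
    rw [heq] at h
    exact Nb.not_chron_self L' (hmaps ht) h
  have hγcaus : ∀ ⦃s t : ℝ⦄, s ∈ Icc (0:ℝ) 1 → t ∈ Icc (0:ℝ) 1 → s ≤ t →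
      L'.causal (γ' s) (γ' t) := by
    intro s t hs ht hst
    rcases eq_or_lt_of_le hst with h | h
    · rw [h]; exact L'.causal_refl _
    · exact L'.chron_le_causal (hch hs ht h)
  have h0m : (0:ℝ) ∈ Icc (0:ℝ) 1 := ⟨le_rfl, zero_le_one⟩
  have h1m : (1:ℝ) ∈ Icc (0:ℝ) 1 := ⟨zero_le_one, le_rfl⟩
  -- segments of γ' have τ-length at most ω of their endpoints
  have seg : ∀ ⦃a b : ℝ⦄, 0 ≤ a → a ≤ b → b ≤ 1 →
      L'.tauLen γ' a b ≤ Nb.omega (γ' a) (γ' b) := by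
    intro a b ha hab hb
    rcases eq_or_lt_of_le hab with h | h
    · subst h; rw [L'.tauLen_self]; exact zero_le
    · have ham : a ∈ Icc (0:ℝ) 1 := ⟨ha, hab.trans hb⟩
      have hbm : b ∈ Icc (0:ℝ) 1 := ⟨ha.trans hab, hb⟩
      have hsub : Icc a b ⊆ Icc (0:ℝ) 1 := Icc_subset_Icc ha hb
      have hcausab : L'.IsCausalOn γ' (Icc a b) :=
        L'.isCausalOn_of_subset hγ'tl.1 hsub
          ⟨a, ⟨le_rfl, hab⟩, b, ⟨hab, le_rfl⟩, hinj ham hbm h⟩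
      obtain ⟨μ, hμc, hμ0, hμ1, hμm, hμmax, hμlen, -⟩ :=
        Nb.max_curve _ (hmaps ham) _ (hmaps hbm) (hγcaus ham hbm hab) (hinj ham hbm h)
      rw [← hμlen]
      exact hμmax γ' a b hcausab hμ0.symm hμ1.symm (fun x hx => hmaps (hsub hx))
  -- ω between points of γ' is at most the τ-length of the corresponding segment
  have key : ∀ ⦃c d : ℝ⦄, 0 ≤ c → c ≤ d → d ≤ 1 →
      Nb.omega (γ' c) (γ' d) ≤ L'.tauLen γ' c d := by
    intro c d hc hcd hd
    have hcm : c ∈ Icc (0:ℝ) 1 := ⟨hc, hcd.trans hd⟩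
    have hdm : d ∈ Icc (0:ℝ) 1 := ⟨hc.trans hcd, hd⟩
    have hA := Nb.omega_rev_triangle (hmaps h0m) (hmaps hcm) (hmaps hdm)
      (hγcaus h0m hcm hc) (hγcaus hcm hdm hcd)
    have hB := Nb.omega_rev_triangle (hmaps h0m) (hmaps hdm) (hmaps h1m)
      (hγcaus h0m hdm (hc.trans hcd)) (hγcaus hdm h1m hd)
    have hchain : Nb.omega (γ' 0) (γ' c) + (Nb.omega (γ' c) (γ' d) + Nb.omega (γ' d) (γ' 1))
        ≤ Nb.omega (γ' 0) (γ' c) + (L'.tauLen γ' c d + Nb.omega (γ' d) (γ' 1)) := by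
      calc Nb.omega (γ' 0) (γ' c) + (Nb.omega (γ' c) (γ' d) + Nb.omega (γ' d) (γ' 1))
          = Nb.omega (γ' 0) (γ' c) + Nb.omega (γ' c) (γ' d) + Nb.omega (γ' d) (γ' 1) :=
            (add_assoc _ _ _).symm
        _ ≤ Nb.omega (γ' 0) (γ' d) + Nb.omega (γ' d) (γ' 1) := add_le_add_left hA _
        _ ≤ Nb.omega (γ' 0) (γ' 1) := hB
        _ = L'.tauLen γ' 0 1 := hγ'real.symm
        _ ≤ L'.tauLen γ' 0 c + L'.tauLen γ' c 1 := L'.tauLen_subadd γ' hc (hcd.trans hd)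
        _ ≤ L'.tauLen γ' 0 c + (L'.tauLen γ' c d + L'.tauLen γ' d 1) :=
            add_le_add_right (L'.tauLen_subadd γ' hcd hd) _
        _ ≤ Nb.omega (γ' 0) (γ' c) + (L'.tauLen γ' c d + Nb.omega (γ' d) (γ' 1)) :=
            add_le_add (seg le_rfl hc hcm.2)
              (add_le_add_right (seg hdm.1 hd le_rfl) _)
    have hf1 : Nb.omega (γ' 0) (γ' c) ≠ ∞ := (Nb.omega_lt_top _ (hmaps h0m) _ (hmaps hcm)).ne
    have hf2 : Nb.omega (γ' d) (γ' 1) ≠ ∞ := (Nb.omega_lt_top _ (hmaps hdm) _ (hmaps h1m)).ne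
    have step1 := (ENNReal.add_le_add_iff_left hf1).1 hchain
    have step2 : Nb.omega (γ' d) (γ' 1) + Nb.omega (γ' c) (γ' d)
        ≤ Nb.omega (γ' d) (γ' 1) + L'.tauLen γ' c d := by
      calc Nb.omega (γ' d) (γ' 1) + Nb.omega (γ' c) (γ' d)
          = Nb.omega (γ' c) (γ' d) + Nb.omega (γ' d) (γ' 1) := add_comm _ _
        _ ≤ L'.tauLen γ' c d + Nb.omega (γ' d) (γ' 1) := step1
        _ = Nb.omega (γ' d) (γ' 1) + L'.tauLen γ' c d := add_comm _ _
    exact (ENNReal.add_le_add_iff_left hf2).1 step2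
  -- λ is timelike on I
  have h0I : (0:ℝ) ∈ I := ⟨le_rfl, ht0⟩
  have hhalfI : tstar / 2 ∈ I := ⟨by linarith, by linarith⟩
  have hγ'I : L'.IsTimelikeOn γ' I :=
    L'.isTimelikeOn_of_subset hγ'tl hIsub
      ⟨0, h0I, tstar / 2, hhalfI, hinj (hIsub h0I) (hIsub hhalfI) (by linarith)⟩
  have hιlamI : L'.IsTimelikeOn (E.ι ∘ lam) I :=
    L'.isTimelikeOn_congr (fun t ht => (hlam t ht).symm) hγ'I
  have hlamI : L.IsTimelikeOn lam I := (E.timelike_iff lam I Set.ordConnected_Ico).2 hιlamI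
  have hlamne : ∀ ⦃s t : ℝ⦄, s ∈ I → t ∈ I → s < t → lam s ≠ lam t := by
    intro s t hs ht hst heq
    exact hinj (hIsub hs) (hIsub ht) hst (by rw [← hlam s hs, ← hlam t ht, heq])
  -- λ is a geodesic on I
  have hgeo : L.IsGeodesicOn lam I := by
    refine ⟨hlamI.1, fun t₀ ht₀ => ?_⟩
    obtain ⟨NbX⟩ := hL.localisable (lam t₀)
    have hιt₀ : E.ι (lam t₀) ∈ Nb.Ω := by rw [hlam t₀ ht₀]; exact hmaps (hIsub ht₀)
    have hVmem : NbX.Ω ∩ E.ι ⁻¹' Nb.Ω ∈ 𝓝 (lam t₀) :=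
      (NbX.isOpen.inter (Nb.isOpen.preimage E.isometry.continuous)).mem_nhds ⟨NbX.mem, hιt₀⟩
    obtain ⟨U, hUmem, hUV, hUstay⟩ := hSC (lam t₀) _ hVmem
    set b := (t₀ + tstar) / 2 with hb
    have ht₀tstar : t₀ < tstar := ht₀.2
    have ht₀b : t₀ < b := by rw [hb]; linarith
    have hbt : b < tstar := by rw [hb]; linarith
    have hIccb : Icc (0:ℝ) b ⊆ I := fun x hx => ⟨hx.1, lt_of_le_of_lt hx.2 hbt⟩
    obtain ⟨K, hK⟩ := hlamI.1.1 0 b (le_trans ht₀.1 ht₀b.le) hIccb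
    have hcont : ContinuousWithinAt lam (Icc 0 b) t₀ :=
      hK.continuousOn.continuousWithinAt ⟨ht₀.1, ht₀b.le⟩
    have hpre : lam ⁻¹' U ∈ 𝓝[Icc (0:ℝ) b] t₀ := hcont hUmem
    rw [mem_nhdsWithin] at hpre
    obtain ⟨W, hWopen, hWt₀, hWsub⟩ := hpre
    obtain ⟨ε, hε, hball⟩ := Metric.isOpen_iff.1 hWopen t₀ hWt₀
    set c := max 0 (t₀ - ε / 2) with hc
    set d := min b (t₀ + ε / 2) with hd
    have hct₀ : c ≤ t₀ := max_le ht₀.1 (by linarith)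
    have ht₀d : t₀ < d := lt_min ht₀b (by linarith)
    have hcd : c < d := lt_of_le_of_lt hct₀ ht₀d
    have hsubI : Icc c d ⊆ I := fun x hx =>
      ⟨le_trans (le_max_left 0 _) hx.1, lt_of_le_of_lt (hx.2.trans (min_le_left _ _)) hbt⟩
    have hsub0b : Icc c d ⊆ Icc 0 b := fun x hx =>
      ⟨le_trans (le_max_left 0 _) hx.1, hx.2.trans (min_le_left _ _)⟩
    have hmapU : MapsTo lam (Icc c d) U := by
      intro x hx
      refine hWsub ⟨hball ?_, hsub0b hx⟩
      rw [Metric.mem_ball, Real.dist_eq, abs_lt]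
      have hx1 := le_trans (le_max_right 0 (t₀ - ε / 2)) hx.1
      have hx2 := hx.2.trans (min_le_right b (t₀ + ε / 2))
      constructor <;> linarith
    have hcI := hsubI ⟨le_rfl, hcd.le⟩
    have hdI := hsubI ⟨hcd.le, le_rfl⟩
    have hcm : c ∈ Icc (0:ℝ) 1 := hIsub hcI
    have hdm : d ∈ Icc (0:ℝ) 1 := hIsub hdI
    have hnhds : Icc c d ∈ 𝓝[I] t₀ := by
      rw [mem_nhdsWithin]
      refine ⟨Ioo (t₀ - ε / 2) d, isOpen_Ioo, ⟨by linarith, ht₀d⟩, ?_⟩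
      rintro x ⟨⟨hx1, hx2⟩, hxI⟩
      exact ⟨max_le hxI.1 hx1.le, hx2.le⟩
    refine ⟨NbX, c, d, hct₀, ht₀d.le, hcd, hsubI, hnhds,
      fun x hx => (hUV (hmapU hx)).1, ?_⟩
    intro σ c' d' hσ hσc hσd _
    have hc'd' : c' ≤ d' := by
      obtain ⟨s, hs, -⟩ := hσ.2.2
      exact hs.1.trans hs.2
    have hstay : MapsTo σ (Icc c' d') (NbX.Ω ∩ E.ι ⁻¹' Nb.Ω) :=
      hUstay σ c' d' hc'd' hσ (by rw [hσc]; exact hmapU ⟨le_rfl, hcd.le⟩)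
        (by rw [hσd]; exact hmapU ⟨hcd.le, le_rfl⟩)
    have hσY : L'.IsCausalOn (E.ι ∘ σ) (Icc c' d') :=
      (E.causal_iff σ (Icc c' d') Set.ordConnected_Icc).1 hσ
    obtain ⟨μ, hμc, hμ0, hμ1, hμm, hμmax, hμlen, -⟩ :=
      Nb.max_curve _ (hmaps hcm) _ (hmaps hdm) (hγcaus hcm hdm hcd.le) (hinj hcm hdm hcd)
    have h5 : L'.tauLen (E.ι ∘ σ) c' d' ≤ Nb.omega (γ' c) (γ' d) := by
      rw [← hμlen]
      refine hμmax (E.ι ∘ σ) c' d' hσY ?_ ?_ (fun x hx => (hstay hx).2)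
      · show E.ι (σ c') = μ 0
        rw [hσc, hlam c hcI, hμ0]
      · show E.ι (σ d') = μ 1
        rw [hσd, hlam d hdI, hμ1]
    have hlamcd : L.IsCausalOn lam (Icc c d) :=
      L.isCausalOn_of_subset hlamI.1 hsubI
        ⟨c, ⟨le_rfl, hcd.le⟩, d, ⟨hcd.le, le_rfl⟩, hlamne hcI hdI hcd⟩
    calc L.tauLen σ c' d' = L'.tauLen (E.ι ∘ σ) c' d' := E.len_eq σ c' d' hσ
      _ ≤ Nb.omega (γ' c) (γ' d) := h5
      _ ≤ L'.tauLen γ' c d := key hcm.1 hcd.le hdm.2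
      _ = L'.tauLen (E.ι ∘ lam) c d := L'.tauLen_congr (fun x hx => (hlam x (hsubI hx)).symm)
      _ = L.tauLen lam c d := (E.len_eq lam c d hlamcd).symm
  -- finiteness
  have hfin : L.tauLenOn lam I < ∞ := by
    have hbound : L.tauLenOn lam I ≤ Nb.omega (γ' 0) (γ' 1) := by
      refine iSup_le fun c => iSup_le fun d => iSup_le fun hcd => iSup_le fun hsub => ?_
      rcases eq_or_lt_of_le hcd with h | h
      · subst h; rw [L.tauLen_self]; exact zero_le
      · have hcI := hsub ⟨le_rfl, hcd⟩
        have hdI := hsub ⟨hcd, le_rfl⟩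
        have hcm := hIsub hcI
        have hdm := hIsub hdI
        have hlamcd : L.IsCausalOn lam (Icc c d) :=
          L.isCausalOn_of_subset hlamI.1 hsub
            ⟨c, ⟨le_rfl, hcd⟩, d, ⟨hcd, le_rfl⟩, hlamne hcI hdI h⟩
        have e1 : L.tauLen lam c d = L'.tauLen γ' c d := by
          rw [E.len_eq lam c d hlamcd]
          exact L'.tauLen_congr (fun x hx => hlam x (hsub hx))
        rw [e1]
        have hA := Nb.omega_rev_triangle (hmaps h0m) (hmaps hcm) (hmaps hdm)
          (hγcaus h0m hcm hcm.1) (hγcaus hcm hdm hcd)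
        have hB := Nb.omega_rev_triangle (hmaps h0m) (hmaps hdm) (hmaps h1m)
          (hγcaus h0m hdm hdm.1) (hγcaus hdm h1m hdm.2)
        calc L'.tauLen γ' c d ≤ Nb.omega (γ' c) (γ' d) := seg hcm.1 hcd hdm.2
          _ ≤ Nb.omega (γ' 0) (γ' c) + Nb.omega (γ' c) (γ' d) := le_add_self
          _ ≤ Nb.omega (γ' 0) (γ' d) := hA
          _ ≤ Nb.omega (γ' 0) (γ' d) + Nb.omega (γ' d) (γ' 1) := le_self_add
          _ ≤ Nb.omega (γ' 0) (γ' 1) := hB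
    exact lt_of_le_of_lt hbound (Nb.omega_lt_top _ (hmaps h0m) _ (hmaps h1m))
  refine ⟨⟨hgeo, hlamI⟩, hfin, ?_⟩
  -- inextendibility
  rintro ⟨lam', hlam'geo, hagree⟩
  obtain ⟨K, hK⟩ := hlam'geo.1.1 0 tstar ht0.le subset_rfl
  have hcont' : ContinuousWithinAt lam' (Icc 0 tstar) tstar :=
    hK.continuousOn.continuousWithinAt ⟨ht0.le, le_rfl⟩
  haveI hF : (𝓝[I] tstar).NeBot := by
    refine mem_closure_iff_nhdsWithin_neBot.1 ?_
    rw [hI, closure_Ico (ne_of_lt ht0)]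
    exact ⟨ht0.le, le_rfl⟩
  have T1 : Filter.Tendsto (fun t => E.ι (lam' t)) (𝓝[I] tstar) (𝓝 (E.ι (lam' tstar))) :=
    (E.isometry.continuous.continuousAt.comp_continuousWithinAt hcont').mono_left
      (nhdsWithin_mono _ Ico_subset_Icc_self)
  have T2 : Filter.Tendsto γ' (𝓝[I] tstar) (𝓝 (γ' tstar)) := by
    obtain ⟨K2, hK2⟩ := hγ'tl.1.1 0 1 zero_le_one subset_rfl
    exact (hK2.continuousOn.continuousWithinAt ⟨ht0.le, ht1.le⟩).mono_left
      (nhdsWithin_mono _ hIsub)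
  have heq : (fun t => E.ι (lam' t)) =ᶠ[𝓝[I] tstar] γ' := by
    filter_upwards [self_mem_nhdsWithin] with t ht
    rw [hagree t ht, hlam t ht]
  exact hout ⟨lam' tstar, tendsto_nhds_unique (T1.congr' heq) T2⟩
end
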